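/- Let w be a word of length t over Σ, and for 0 ≤ i < k let w↾_{i mod k} be the subword of letters at positions ≡ i (mod k). Then w lies in (⋃_{a∈Σ} {a^k})^* if and only if k divides t and w↾_{0 mod k} = w↾_{1 mod k} = ... = w↾_{(k−1) mod k}. -/

import Mathlib

/-- The `(i mod k)`-restriction of a word: letters at positions ≡ i (mod k). -/
def restrict {α : Type*} (k i : ℕ) (w : List α) : List α :=
  ((w.zipIdx.map Prod.swap).filter fun p => p.1 % k = i).map Prod.snd

/-- Kleene star of a set of words. -/
def star {α : Type*} (S : Set (List α)) : Set (List α) :=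
  {w | ∃ l : List (List α), (∀ u ∈ l, u ∈ S) ∧ l.flatten = w}

/-- Auxiliary: restriction with an arbitrary starting index. -/
def R {α : Type*} (k i s : ℕ) (w : List α) : List α :=
  (((w.zipIdx s).map Prod.swap).filter fun p => p.1 % k = i).map Prod.snd

lemma restrict_eq_R {α : Type*} (k i : ℕ) (w : List α) : restrict k i w = R k i 0 w := rfl

lemma R_nil {α : Type*} (k i s : ℕ) : R k i s ([] : List α) = [] := rfl

lemma R_cons {α : Type*} (k i s : ℕ) (a : α) (w : List α) :
    R k i s (a :: w) = (if s % k = i then [a] else []) ++ R k i (s+1) w := by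
  simp [R, List.zipIdx_cons, List.filter_cons]
  split <;> simp_all

lemma R_append {α : Type*} (k i : ℕ) (u v : List α) : ∀ s,
    R k i s (u ++ v) = R k i s u ++ R k i (s + u.length) v := by
  induction u with
  | nil => intro s; simp [R_nil]
  | cons a u ih =>
    intro s
    simp only [List.cons_append, R_cons, ih (s+1), List.length_cons]
    rw [List.append_assoc]
    ring_nf

lemma R_shift {α : Type*} (k i : ℕ) (w : List α) : ∀ s, R k i (s + k) w = R k i s w := by
  induction w with
  | nil => intro s; simp [R_nil]
  | cons a w ih =>
    intro s
    rw [R_cons, R_cons, Nat.add_mod_right, show s + k + 1 = (s+1) + k by ring, ih]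

lemma R_short {α : Type*} (k i : ℕ) (w : List α) : ∀ s, s + w.length ≤ k →
    R k i s w = if h : s ≤ i ∧ i < s + w.length then [w[i - s]'(by omega)] else [] := by
  induction w with
  | nil => intro s h; simp [R_nil]
  | cons a w ih =>
    intro s h
    simp only [List.length_cons] at h ⊢
    rw [R_cons, ih (s+1) (by omega), Nat.mod_eq_of_lt (by omega)]
    by_cases h1 : s = i
    · subst h1
      rw [if_pos rfl, dif_neg (by omega), dif_pos (by omega)]
      simp
    · rw [if_neg h1]
      by_cases h2 : s + 1 ≤ i ∧ i < s + 1 + w.length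
      · rw [dif_pos h2, dif_pos (by omega)]
        simp only [List.nil_append]
        congr 1
        have : i - s = (i - (s+1)) + 1 := by omega
        simp [this]
      · rw [dif_neg h2, dif_neg (by omega)]
        simp

lemma restrict_split {α : Type*} {k i : ℕ} {w : List α} (hk : k ≤ w.length) (hi : i < k) :
    restrict k i w = w[i]'(by omega) :: restrict k i (w.drop k) := by
  conv_lhs => rw [restrict_eq_R, ← List.take_append_drop k w, R_append]
  rw [List.length_take, min_eq_left hk, R_short k i _ 0 (by simp [min_eq_left hk]),
    dif_pos (by simp; omega)]
  rw [show (0:ℕ) + k = 0 + k from rfl, R_shift, ← restrict_eq_R]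
  simp [List.getElem_take]

lemma back_aux {α : Type*} (k : ℕ) (hk : 0 < k) : ∀ n (w : List α), w.length = n → k ∣ n →
    (∀ i < k, restrict k i w = restrict k 0 w) →
    ∃ l : List (List α), (∀ u ∈ l, ∃ a : α, u = List.replicate k a) ∧ l.flatten = w := by
  intro n
  induction n using Nat.strong_induction_on with
  | _ n ih =>
    intro w hlen hd hr
    rcases eq_or_ne w [] with rfl | hne
    · exact ⟨[], by simp, rfl⟩
    · have hpos : 0 < w.length := List.length_pos_iff.mpr hne
      have hkw : k ≤ w.length := Nat.le_of_dvd hpos (hlen ▸ hd)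
      have h0 : 0 < w.length := by omega
      -- heads
      have hhead : ∀ i (hi : i < k), w[i]'(by omega) = w[0]'h0 ∧
          restrict k i (w.drop k) = restrict k 0 (w.drop k) := by
        intro i hi
        have := hr i hi
        rw [restrict_split hkw hi, restrict_split hkw hk] at this
        exact ⟨List.head_eq_of_cons_eq this, List.tail_eq_of_cons_eq this⟩
      obtain ⟨l, hl, hfl⟩ := ih (n - k) (by omega) (w.drop k) (by simp [hlen])
        (Nat.dvd_sub hd dvd_rfl)
        (fun i hi => (hhead i hi).2)
      refine ⟨List.replicate k (w[0]'h0) :: l, ?_, ?_⟩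
      · intro u hu
        rcases List.mem_cons.mp hu with rfl | hu
        · exact ⟨_, rfl⟩
        · exact hl u hu
      · have htake : w.take k = List.replicate k (w[0]'h0) := by
          apply List.ext_getElem (by simp [min_eq_left hkw])
          intro i h1 h2
          have hik : i < k := by simpa [min_eq_left hkw] using h1
          simp only [List.getElem_take, List.getElem_replicate]
          exact (hhead i hik).1
        simp only [List.flatten_cons, hfl, ← htake, List.take_append_drop]

/-- A word `w` lies in `(⋃_{a∈Σ} {a^k})^*` iff `k` divides `|w|` and all of the
restrictions `w↾_{0 mod k}, …, w↾_{(k-1) mod k}` coincide. -/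
theorem mem_star_replicate_iff {α : Type*} (k : ℕ) (hk : 0 < k) (w : List α) :
    w ∈ star {v | ∃ a : α, v = List.replicate k a} ↔
      k ∣ w.length ∧ ∀ i : ℕ, i < k → restrict k i w = restrict k 0 w := by
  constructor
  · rintro ⟨l, hl, rfl⟩
    induction l with
    | nil => simp [restrict]
    | cons u l ih =>
      obtain ⟨a, rfl⟩ := hl u (by simp)
      obtain ⟨ih1, ih2⟩ := ih (fun v hv => hl v (by simp [hv]))
      have hlen : k ≤ ((List.replicate k a :: l).flatten).length := by simp
      have hdrop : ((List.replicate k a :: l).flatten).drop k = l.flatten := by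
        rw [List.flatten_cons]
        exact List.drop_left' (by simp)
      refine ⟨?_, fun i hi => ?_⟩
      · simp only [List.flatten_cons, List.length_append, List.length_replicate]
        exact Nat.dvd_add dvd_rfl ih1
      rw [restrict_split hlen hi, restrict_split hlen hk, hdrop, ih2 i hi]
      congr 1
      simp only [List.flatten_cons]
      rw [List.getElem_append_left (by simpa), List.getElem_append_left (by simpa)]
      simp
  · rintro ⟨hd, hr⟩
    exact back_aux k hk w.length w rfl hd hr
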